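/- arXiv:1509.05836 — 2 statements merged into one kernel-verified Lean document; each statement's English description precedes it below -/
import Mathlib

section
/- Let p > 1, c > 0 and k > 0 be real numbers. If c·k^(p-1) ≤ (1/p)·((p-1)/p)^(p-1), then for t_p = (p/(p-1))^p one has (c·t_p·k^(p-1) + 1)^p ≤ t_p. -/
theorem barrier_fixed_point (p c k : ℝ) (hp : 1 < p) (hc : 0 < c) (hk : 0 < k)
    (h : c * k ^ (p - 1) ≤ (1 / p) * ((p - 1) / p) ^ (p - 1)) :
    (c * ((p / (p - 1)) ^ p) * k ^ (p - 1) + 1) ^ p ≤ (p / (p - 1)) ^ p := by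
  have hp0 : (0:ℝ) < p := by linarith
  have hp1 : (0:ℝ) < p - 1 := by linarith
  have ha : (0:ℝ) < p / (p - 1) := div_pos hp0 hp1
  have ht : (0:ℝ) < (p / (p - 1)) ^ p := Real.rpow_pos_of_pos ha p
  -- key identity
  have hinv : (p - 1) / p = (p / (p - 1))⁻¹ := by
    field_simp
  have hkey : (p / (p - 1)) ^ p * ((1 / p) * ((p - 1) / p) ^ (p - 1)) = 1 / (p - 1) := by
    rw [hinv, Real.inv_rpow ha.le, ← Real.rpow_neg ha.le, mul_comm (1/p),
        ← mul_assoc, ← Real.rpow_add ha]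
    have : p + -(p - 1) = 1 := by ring
    rw [this, Real.rpow_one]
    field_simp
  have h2 : c * ((p / (p - 1)) ^ p) * k ^ (p - 1) ≤ 1 / (p - 1) := by
    calc c * ((p / (p - 1)) ^ p) * k ^ (p - 1)
        = (p / (p - 1)) ^ p * (c * k ^ (p - 1)) := by ring
      _ ≤ (p / (p - 1)) ^ p * ((1 / p) * ((p - 1) / p) ^ (p - 1)) := by
          exact mul_le_mul_of_nonneg_left h ht.le
      _ = 1 / (p - 1) := hkey
  have h3 : c * ((p / (p - 1)) ^ p) * k ^ (p - 1) + 1 ≤ p / (p - 1) := by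
    have : 1 / (p - 1) + 1 = p / (p - 1) := by field_simp; ring
    linarith
  have hbase : 0 ≤ c * ((p / (p - 1)) ^ p) * k ^ (p - 1) + 1 := by
    have := Real.rpow_pos_of_pos hk (p - 1)
    positivity
  exact Real.rpow_le_rpow hbase h3 hp0.le
end

section
/- Let p > 1 and set c_p = min{1, p-1}. Define f(s,t) = (s+t)^p - s^p and F(s,t) = (1/(p+1))·((s+t)^{p+1} - s^{p+1} - (p+1)·s^p·t) for s, t ≥ 0. Then f(s,t)·t - (2+c_p)·F(s,t) ≥ -(c_p·p/2)·s^{p-1}·t^2 for all s, t ≥ 0. -/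
open Real Set

private lemma hasDerivAt_congr_d {f : ℝ → ℝ} {d d' x : ℝ} (h : HasDerivAt f d x)
    (he : d' = d) : HasDerivAt f d' x := he ▸ h

private lemma nonneg_of_deriv_aux (g g' : ℝ → ℝ) (hc : ContinuousOn g (Ici 0))
    (hd : ∀ x ∈ Ioi (0:ℝ), HasDerivAt g (g' x) x)
    (h0 : g 0 = 0) (hpos : ∀ x ∈ Ioi (0:ℝ), 0 ≤ g' x) {t : ℝ} (ht : 0 ≤ t) : 0 ≤ g t := by
  have hmono : MonotoneOn g (Ici 0) := by
    apply monotoneOn_of_deriv_nonneg (convex_Ici 0) hc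
    · intro x hx
      rw [interior_Ici] at hx
      exact (hd x hx).differentiableAt.differentiableWithinAt
    · intro x hx
      rw [interior_Ici] at hx
      rw [(hd x hx).deriv]
      exact hpos x hx
  have := hmono self_mem_Ici (mem_Ici.2 ht) ht
  rwa [h0] at this

private lemma key_step (p : ℝ) (hp : 1 < p) (s t : ℝ) (hs : 0 ≤ s) (ht : 0 < t) :
    min 1 (p - 1) * (s + t) ^ (p - 1) ≤
      (p - 1) * (s + t) ^ (p - 2) * t + min 1 (p - 1) * s ^ (p - 1) := by
  have ha : 0 < s + t := by linarith
  rcases le_total 1 (p - 1) with h | h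
  · -- p ≥ 2, c = 1
    rw [min_eq_left h]
    have hx : (-1:ℝ) ≤ -(t / (s + t)) := by
      rw [neg_le_neg_iff]
      exact div_le_one_of_le₀ (by linarith) ha.le
    have hb := one_add_mul_self_le_rpow_one_add hx h
    have h1 : 1 + -(t / (s + t)) = s / (s + t) := by field_simp; ring
    rw [h1] at hb
    have hb2 : ((s + t) ^ (p - 1)) * (1 + (p - 1) * -(t / (s + t))) ≤
        ((s + t) ^ (p - 1)) * (s / (s + t)) ^ (p - 1) :=
      mul_le_mul_of_nonneg_left hb (rpow_nonneg ha.le _)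
    rw [div_rpow hs ha.le, mul_div_cancel₀ _ (by positivity : (s + t) ^ (p - 1) ≠ 0)] at hb2
    have h2 : (s + t) ^ (p - 1) * (1 + (p - 1) * -(t / (s + t))) =
        (s + t) ^ (p - 1) - (p - 1) * ((s + t) ^ (p - 1) / (s + t)) * t := by
      field_simp
      ring
    rw [h2] at hb2
    have h3 : (s + t) ^ (p - 1) / (s + t) = (s + t) ^ (p - 2) := by
      rw [← rpow_sub_one ha.ne']
      congr 1; ring
    rw [h3] at hb2
    linarith
  · -- p < 2, c = p - 1
    rw [min_eq_right h]
    have hq : 0 < p - 1 := by linarith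
    have key : (s + t) ^ (p - 2) * s ≤ s ^ (p - 1) := by
      rcases eq_or_lt_of_le hs with rfl | hs'
      · simp [Real.zero_rpow (by linarith : p - 1 ≠ 0)]
      · have h1 : (s + t) ^ (p - 2) ≤ s ^ (p - 2) :=
          rpow_le_rpow_of_nonpos hs' (by linarith) (by linarith)
        calc (s + t) ^ (p - 2) * s ≤ s ^ (p - 2) * s :=
              mul_le_mul_of_nonneg_right h1 hs
          _ = s ^ (p - 1) := by
              rw [← rpow_add_one hs'.ne']
              congr 1; ring
    have h4 : (s + t) ^ (p - 1) = (s + t) ^ (p - 2) * (s + t) := by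
      rw [← rpow_add_one ha.ne']
      congr 1; ring
    have hnn : 0 ≤ (s + t) ^ (p - 2) := rpow_nonneg ha.le _
    nlinarith [mul_le_mul_of_nonneg_left key hq.le]

theorem ni_serrin_inequality (p : ℝ) (hp : 1 < p) (s t : ℝ) (hs : 0 ≤ s) (ht : 0 ≤ t) :
    ((s + t) ^ p - s ^ p) * t -
      (2 + min 1 (p - 1)) *
        ((1 / (p + 1)) * ((s + t) ^ (p + 1) - s ^ (p + 1) - (p + 1) * s ^ p * t)) ≥
      -(min 1 (p - 1) * p / 2) * s ^ (p - 1) * t ^ 2 := by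
  set c := min 1 (p - 1) with hc
  have hc0 : 0 < c := lt_min one_pos (by linarith)
  have hp1 : p + 1 ≠ 0 := by linarith
  set g : ℝ → ℝ := fun x => ((s + x) ^ p - s ^ p) * x -
      (2 + c) * ((1 / (p + 1)) * ((s + x) ^ (p + 1) - s ^ (p + 1) - (p + 1) * s ^ p * x)) +
      c * p / 2 * s ^ (p - 1) * x ^ 2 with hg
  set g1 : ℝ → ℝ := fun x => p * (s + x) ^ (p - 1) * x - (1 + c) * ((s + x) ^ p - s ^ p) +
      c * p * s ^ (p - 1) * x with hg1
  set g2 : ℝ → ℝ := fun x => p * ((p - 1) * (s + x) ^ (p - 2) * x - c * (s + x) ^ (p - 1) +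
      c * s ^ (p - 1)) with hg2
  have hderiv : ∀ x : ℝ, HasDerivAt (fun y : ℝ => s + y) 1 x :=
    fun x => (hasDerivAt_id x).const_add s
  have hpos : ∀ x ∈ Ioi (0:ℝ), 0 < s + x := fun x hx => by
    have : (0:ℝ) < x := hx
    linarith
  -- derivative of g is g1
  have hdg : ∀ x ∈ Ioi (0:ℝ), HasDerivAt g (g1 x) x := by
    intro x hx
    have hne : s + x ≠ 0 := (hpos x hx).ne'
    have dA := (((hderiv x).rpow_const (p := p) (Or.inl hne)).sub_const (s ^ p)).mul
      (hasDerivAt_id' x)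
    have dB := (((((hderiv x).rpow_const (p := p + 1) (Or.inl hne)).sub_const
      (s ^ (p + 1))).sub ((hasDerivAt_id' x).const_mul ((p + 1) * s ^ p))).const_mul
      (1 / (p + 1))).const_mul (2 + c)
    have dC := (hasDerivAt_pow 2 x).const_mul (c * p / 2 * s ^ (p - 1))
    have D := (dA.sub dB).add dC
    refine hasDerivAt_congr_d D ?_
    have e1 : p + 1 - 1 = p := by ring
    rw [e1]
    simp only [hg1]
    push_cast
    field_simp
    ring
  -- derivative of g1 is g2
  have hdg1 : ∀ x ∈ Ioi (0:ℝ), HasDerivAt g1 (g2 x) x := by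
    intro x hx
    have hne : s + x ≠ 0 := (hpos x hx).ne'
    have dA := (((hderiv x).rpow_const (p := p - 1) (Or.inl hne)).const_mul p).mul
      (hasDerivAt_id' x)
    have dB := (((hderiv x).rpow_const (p := p) (Or.inl hne)).sub_const (s ^ p)).const_mul
      (1 + c)
    have dC := (hasDerivAt_id' x).const_mul (c * p * s ^ (p - 1))
    have D := (dA.sub dB).add dC
    refine hasDerivAt_congr_d D ?_
    have e1 : p - 1 - 1 = p - 2 := by ring
    rw [e1]
    simp only [hg2]
    ring
  -- continuity
  have hcont : ∀ q : ℝ, 0 ≤ q → ContinuousOn (fun x : ℝ => (s + x) ^ q) (Ici 0) := by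
    intro q hq
    exact (continuous_const.add continuous_id).continuousOn.rpow_const (fun x _ => Or.inr hq)
  have hcg : ContinuousOn g (Ici 0) := by
    apply ContinuousOn.add
    · apply ContinuousOn.sub
      · exact ((hcont p (by linarith)).sub continuousOn_const).mul continuous_id.continuousOn
      · exact continuousOn_const.mul (continuousOn_const.mul
          (((hcont (p + 1) (by linarith)).sub continuousOn_const).sub
            (continuousOn_const.mul continuous_id.continuousOn)))
    · exact continuousOn_const.mul (continuous_pow 2).continuousOn
  have hcg1 : ContinuousOn g1 (Ici 0) := by
    apply ContinuousOn.add
    · exact ((continuousOn_const.mul (hcont (p - 1) (by linarith))).mul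
        continuous_id.continuousOn).sub
        (continuousOn_const.mul ((hcont p (by linarith)).sub continuousOn_const))
    · exact continuousOn_const.mul continuous_id.continuousOn
  -- g1 ≥ 0 on Ici 0
  have hg10 : g1 0 = 0 := by simp [hg1]
  have hg2pos : ∀ x ∈ Ioi (0:ℝ), 0 ≤ g2 x := by
    intro x hx
    have hk := key_step p hp s x hs hx
    have hkey : 0 ≤ (p - 1) * (s + x) ^ (p - 2) * x - c * (s + x) ^ (p - 1) +
        c * s ^ (p - 1) := by
      rw [hc]; linarith
    have hpp : (0:ℝ) ≤ p := by linarith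
    simp only [hg2]
    positivity
  have hg1nonneg : ∀ x ∈ Ici (0:ℝ), 0 ≤ g1 x := by
    intro x hx
    exact nonneg_of_deriv_aux g1 g2 hcg1 hdg1 hg10 hg2pos hx
  -- g ≥ 0 on Ici 0
  have hg0 : g 0 = 0 := by simp [hg]
  have hgnonneg : 0 ≤ g t :=
    nonneg_of_deriv_aux g g1 hcg hdg hg0 (fun x hx => hg1nonneg x (mem_Ici.2 (le_of_lt hx))) ht
  simp only [hg] at hgnonneg
  rw [ge_iff_le]
  linarith
end
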